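/- Let J be an unbounded subinterval of ℝ and g : J → ℝ such that g′ exists and is locally absolutely continuous on J, with second derivative g″ ∈ L^∞(J). If g′ ∈ L^α(J) for some α > 1, then g′ ∈ L^∞(J) and ‖g′‖_{J,∞} ≤ ((α+1)/α^{α/(α+1)})·‖g′‖_{J,α}^{α/(α+1)}·‖g″‖_{J,∞}^{1/(α+1)}. (This is the case r = 1, V_J = ‖g″‖_{J,∞} of the bound ‖g′‖_{J,∞} ≤ ((αr+1)/(α^{αr/(αr+1)} r^{αr/(αr+1)}))‖g′‖_{J,α}^{αr/(αr+1)}V_J^{1/(αr+1)}.) -/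

import Mathlib

open MeasureTheory Set

/-- **Corollary.** If `g : J → ℝ` (with `J` an unbounded interval) has a derivative `g'` that
is locally absolutely continuous with a.e. derivative `g''`, `g'' ∈ L^∞(J)` and
`g' ∈ L^α(J)` for some `α > 1`, then `g' ∈ L^∞(J)` and
`‖g'‖_{J,∞} ≤ ((α+1)/α^{α/(α+1)}) ‖g'‖_{J,α}^{α/(α+1)} ‖g''‖_{J,∞}^{1/(α+1)}`. -/
theorem landau_alpha_inf
    (J : Set ℝ) (hJ : J.OrdConnected) (hJu : ¬ Bornology.IsBounded J)
    (g g' g'' : ℝ → ℝ) (α : ℝ) (hα : 1 < α)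
    (hderiv : ∀ x ∈ J, HasDerivWithinAt g (g' x) J x)
    (hint : ∀ a ∈ J, ∀ b ∈ J, IntervalIntegrable g'' volume a b)
    (hftc : ∀ a ∈ J, ∀ b ∈ J, g' b - g' a = ∫ t in a..b, g'' t)
    (hg'' : MemLp g'' ⊤ (volume.restrict J))
    (hg'α : MemLp g' (ENNReal.ofReal α) (volume.restrict J)) :
    MemLp g' ⊤ (volume.restrict J) ∧
      (eLpNorm g' ⊤ (volume.restrict J)).toReal ≤
        (α + 1) / α ^ (α / (α + 1)) *
          (eLpNorm g' (ENNReal.ofReal α) (volume.restrict J)).toReal ^ (α / (α + 1)) *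
            (eLpNorm g'' ⊤ (volume.restrict J)).toReal ^ (1 / (α + 1)) := by
  have hJm : MeasurableSet J := hJ.measurableSet
  have hα0 : (0:ℝ) < α := lt_trans one_pos hα
  have hβ : (0:ℝ) < α + 1 := by linarith
  set M := (eLpNorm g'' ⊤ (volume.restrict J)).toReal with hMdef
  set A := (eLpNorm g' (ENNReal.ofReal α) (volume.restrict J)).toReal with hAdef
  have hM0 : 0 ≤ M := ENNReal.toReal_nonneg
  have hA0 : 0 ≤ A := ENNReal.toReal_nonneg
  set B := (α + 1) / α ^ (α / (α + 1)) * A ^ (α / (α + 1)) * M ^ (1 / (α + 1)) with hBdef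
  have hB0 : 0 ≤ B :=
    mul_nonneg (mul_nonneg (div_nonneg (by linarith) (Real.rpow_nonneg hα0.le _))
      (Real.rpow_nonneg hA0 _)) (Real.rpow_nonneg hM0 _)
  have hpne0 : (ENNReal.ofReal α) ≠ 0 := by simp [ENNReal.ofReal_eq_zero]; linarith
  have hpnet : (ENNReal.ofReal α) ≠ ⊤ := ENNReal.ofReal_ne_top
  -- a.e. bound on g''
  have hg''bd : ∀ᵐ t ∂(volume.restrict J), |g'' t| ≤ M := by
    filter_upwards [ae_le_eLpNormEssSup (f := g'') (μ := volume.restrict J)] with t ht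
    have hfin : eLpNormEssSup g'' (volume.restrict J) ≠ ⊤ := by
      have := hg''.2; rw [eLpNorm_exponent_top] at this; exact this.ne
    have := ENNReal.toReal_mono hfin ht
    simpa [hMdef, eLpNorm_exponent_top, Real.norm_eq_abs] using this
  have hg''bd' : ∀ᵐ t ∂(volume : Measure ℝ), t ∈ J → |g'' t| ≤ M :=
    (ae_restrict_iff' hJm).mp hg''bd
  -- Lipschitz bound for g'
  have hlip : ∀ x ∈ J, ∀ t ∈ J, |g' t - g' x| ≤ M * |t - x| := by
    intro x hx t ht
    rw [hftc x hx t ht]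
    have hb : ∀ᵐ u ∂(volume : Measure ℝ), u ∈ Set.uIoc x t → ‖g'' u‖ ≤ M := by
      filter_upwards [hg''bd'] with u hu hmem
      have huJ : u ∈ J := (uIoc_subset_uIcc.trans (hJ.uIcc_subset hx ht)) hmem
      simpa [Real.norm_eq_abs] using hu huJ
    simpa [Real.norm_eq_abs] using intervalIntegral.norm_integral_le_of_norm_le_const_ae hb
  -- integrability and value of ∫ |g'|^α
  have h1 : IntegrableOn (fun t => |g' t| ^ α) J volume := by
    have := hg'α.integrable_norm_rpow hpne0 hpnet
    simpa [IntegrableOn, ENNReal.toReal_ofReal hα0.le, Real.norm_eq_abs] using this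
  have hIJ0 : 0 ≤ ∫ t in J, |g' t| ^ α := by
    apply setIntegral_nonneg hJm
    intro t _; exact Real.rpow_nonneg (abs_nonneg _) _
  have h2 : A ^ α = ∫ t in J, |g' t| ^ α := by
    have h := hg'α.eLpNorm_eq_integral_rpow_norm hpne0 hpnet
    rw [hAdef, h, ENNReal.toReal_ofReal
      (Real.rpow_nonneg (by positivity) _)]
    rw [ENNReal.toReal_ofReal hα0.le] at *
    simp only [Real.norm_eq_abs]
    exact Real.rpow_inv_rpow hIJ0 hα0.ne'
  -- direction of unboundedness
  have hdir : ¬ BddBelow J ∨ ¬ BddAbove J := by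
    by_contra h
    push_neg at h
    exact hJu (isBounded_iff_bddBelow_bddAbove.mpr ⟨h.1, h.2⟩)
  -- key pointwise bound
  have claim : ∀ x ∈ J, |g' x| ≤ B := by
    intro x hx
    set s := |g' x| with hsdef
    have hs0 : 0 ≤ s := abs_nonneg _
    -- key comparison for any admissible length ℓ
    have key2 : ∀ ℓ : ℝ, 0 ≤ ℓ → 0 ≤ s - M * ℓ → (s - M * ℓ) ^ α * ℓ ≤ A ^ α := by
      intro ℓ hℓ hc
      obtain ⟨u, v, huv, hsubJ, hdist⟩ : ∃ u v : ℝ, v - u = ℓ ∧ Icc u v ⊆ J ∧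
          ∀ t ∈ Icc u v, |t - x| ≤ ℓ := by
        rcases hdir with h | h
        · obtain ⟨a, haJ, ha⟩ := not_bddBelow_iff.mp h (x - ℓ)
          exact ⟨x - ℓ, x, by ring,
            (Icc_subset_Icc_left ha.le).trans (hJ.out haJ hx),
            fun t ht => abs_le.2 ⟨by linarith [ht.1, ht.2], by linarith [ht.1, ht.2]⟩⟩
        · obtain ⟨b, hbJ, hb⟩ := not_bddAbove_iff.mp h (x + ℓ)
          exact ⟨x, x + ℓ, by ring,
            (Icc_subset_Icc_right hb.le).trans (hJ.out hx hbJ),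
            fun t ht => abs_le.2 ⟨by linarith [ht.1, ht.2], by linarith [ht.1, ht.2]⟩⟩
      have hlow : ∀ t ∈ Icc u v, s - M * ℓ ≤ |g' t| := by
        intro t ht
        have h1' := hlip x hx t (hsubJ ht)
        have h2' : M * |t - x| ≤ M * ℓ := mul_le_mul_of_nonneg_left (hdist t ht) hM0
        have h3' : s - |g' t| ≤ |g' t - g' x| := by
          have := abs_sub_abs_le_abs_sub (g' x) (g' t)
          rw [abs_sub_comm] at this
          linarith
        linarith
      calc (s - M * ℓ) ^ α * ℓ
          = ∫ _ in Icc u v, (s - M * ℓ) ^ α := by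
            rw [setIntegral_const, Real.volume_real_Icc, smul_eq_mul, huv,
              max_eq_left hℓ, mul_comm]
        _ ≤ ∫ t in Icc u v, |g' t| ^ α := by
            apply setIntegral_mono_on
            · exact integrableOn_const (by rw [Real.volume_Icc]; exact ENNReal.ofReal_ne_top)
            · exact h1.mono_set hsubJ
            · exact measurableSet_Icc
            · intro t ht
              exact Real.rpow_le_rpow hc (hlow t ht) hα0.le
        _ ≤ ∫ t in J, |g' t| ^ α := by
            apply setIntegral_mono_set h1
            · filter_upwards with t using Real.rpow_nonneg (abs_nonneg _) _
            · exact HasSubset.Subset.eventuallyLE hsubJ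
        _ = A ^ α := h2.symm
    by_cases hMz : M = 0
    · -- g'' vanishes: g' is constant on rays, so must be 0
      by_contra hsB
      have hs : 0 < s := by
        rcases lt_or_eq_of_le hs0 with h | h
        · exact h
        · exact absurd (h ▸ hB0 : s ≤ B) hsB
      have hsα : 0 < s ^ α := Real.rpow_pos_of_pos hs _
      have hℓ : 0 ≤ (A ^ α + 1) / s ^ α := by positivity
      have := key2 ((A ^ α + 1) / s ^ α) hℓ (by rw [hMz]; simpa using hs0)
      rw [hMz] at this
      simp only [zero_mul, sub_zero] at this
      have heq : s ^ α * ((A ^ α + 1) / s ^ α) = A ^ α + 1 := by field_simp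
      rw [heq] at this
      linarith
    · have hM : 0 < M := lt_of_le_of_ne hM0 (Ne.symm hMz)
      rcases eq_or_lt_of_le hs0 with h | hs
      · rw [← h]; exact hB0
      set ℓ := s / ((α + 1) * M) with hℓdef
      have hℓ0 : 0 ≤ ℓ := by positivity
      have hMℓ : M * ℓ = s / (α + 1) := by
        rw [hℓdef]; field_simp
      have hc : s - M * ℓ = s * α / (α + 1) := by rw [hMℓ]; field_simp; ring
      have hc0 : 0 ≤ s - M * ℓ := by rw [hc]; positivity
      have hkey := key2 ℓ hℓ0 hc0
      rw [hc, hℓdef] at hkey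
      -- rewrite LHS as s^(α+1) * α^α / ((α+1)^(α+1) * M)
      have hLHS : (s * α / (α + 1)) ^ α * (s / ((α + 1) * M))
          = s ^ (α + 1) * α ^ α / ((α + 1) ^ (α + 1) * M) := by
        rw [Real.div_rpow (by positivity) hβ.le, Real.mul_rpow hs.le hα0.le,
          Real.rpow_add_one hs.ne', Real.rpow_add_one hβ.ne']
        field_simp
      rw [hLHS] at hkey
      have h3 : s ^ (α + 1) ≤ (α + 1) ^ (α + 1) / α ^ α * A ^ α * M := by
        have hαα : (0:ℝ) < α ^ α := Real.rpow_pos_of_pos hα0 _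
        have hββ : (0:ℝ) < (α + 1) ^ (α + 1) := Real.rpow_pos_of_pos hβ _
        rw [div_le_iff₀ (by positivity)] at hkey
        rw [div_mul_eq_mul_div, div_mul_eq_mul_div, le_div_iff₀ hαα]
        linarith [hkey]
      -- take (α+1)-th roots
      have h4 : s = (s ^ (α + 1)) ^ (α + 1)⁻¹ := (Real.rpow_rpow_inv hs0 hβ.ne').symm
      have h5 : (s ^ (α + 1)) ^ (α + 1)⁻¹
          ≤ ((α + 1) ^ (α + 1) / α ^ α * A ^ α * M) ^ (α + 1)⁻¹ :=
        Real.rpow_le_rpow (Real.rpow_nonneg hs0 _) h3 (by positivity)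
      have h6 : ((α + 1) ^ (α + 1) / α ^ α * A ^ α * M) ^ (α + 1)⁻¹ = B := by
        rw [Real.mul_rpow (by positivity) hM0,
          Real.mul_rpow (by positivity) (Real.rpow_nonneg hA0 _),
          Real.div_rpow (Real.rpow_nonneg hβ.le _) (Real.rpow_nonneg hα0.le _),
          Real.rpow_rpow_inv hβ.le hβ.ne',
          ← Real.rpow_mul hα0.le, ← Real.rpow_mul hA0, hBdef,
          div_eq_mul_inv α (α+1), one_div]
      rw [h4]
      rw [h6] at h5
      exact h5
  -- conclude
  have hae : ∀ᵐ t ∂(volume.restrict J), ‖g' t‖ ≤ B := by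
    filter_upwards [ae_restrict_mem hJm] with t ht
    simpa [Real.norm_eq_abs] using claim t ht
  have htop : eLpNorm g' ⊤ (volume.restrict J) ≤ ENNReal.ofReal B := by
    rw [eLpNorm_exponent_top]
    exact eLpNormEssSup_le_of_ae_bound hae
  refine ⟨⟨hg'α.1, lt_of_le_of_lt htop ENNReal.ofReal_lt_top⟩, ?_⟩
  calc (eLpNorm g' ⊤ (volume.restrict J)).toReal
      ≤ (ENNReal.ofReal B).toReal := ENNReal.toReal_mono ENNReal.ofReal_ne_top htop
    _ = B := ENNReal.toReal_ofReal hB0
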